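/- Let G be a finite abelian group, m > 1, and γ_1,...,γ_m the automorphisms of G^m defined by (g_1,...,g_m)^{γ_i} = (g_1,...,g_{i-1}, g_{i-1} g_i^{-1} g_{i+1}, g_{i+1},...,g_m) (g_0 = g_{m+1} = e). Then γ_i γ_j = γ_j γ_i whenever |i−j| > 1, and (γ_i γ_{i+1})^3 = id for 1 ≤ i ≤ m−1. Consequently, if |G| > 2 the subgroup generated by γ_1,...,γ_m is isomorphic to the symmetric group S_{m+1}. -/

import Mathlib

namespace CayleyStmt16

variable {G : Type*}

def coord [Group G] (m : ℕ) (g : Fin m → G) (p : ℕ) : G :=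
  if h : 1 ≤ p ∧ p ≤ m then g ⟨p - 1, by omega⟩ else 1

def gam [Group G] (m i : ℕ) (g : Fin m → G) : Fin m → G :=
  fun j => if j.1 + 1 = i then coord m g (i - 1) * (coord m g i)⁻¹ * coord m g (i + 1)
    else g j

section AUX
variable [CommGroup G]

lemma coord_pos {m p : ℕ} (g : Fin m → G) (h1 : 1 ≤ p) (h2 : p ≤ m) :
    coord m g p = g ⟨p - 1, by omega⟩ := dif_pos ⟨h1, h2⟩

lemma coord_zero {m : ℕ} (g : Fin m → G) : coord m g 0 = 1 := dif_neg (by omega)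

lemma coord_top {m : ℕ} (g : Fin m → G) : coord m g (m + 1) = 1 := dif_neg (by omega)

def yc (m : ℕ) (g : Fin m → G) (k : ℕ) : G := coord m g (k + 1) / coord m g k

def gOf (m : ℕ) (y : Fin (m + 1) → G) : Fin m → G :=
  fun j => ∏ l : Fin (m + 1), if l.1 ≤ j.1 then y l else 1

lemma gOf_yc {m : ℕ} (g : Fin m → G) : gOf m (fun k => yc m g k.1) = g := by
  funext j
  show (∏ l : Fin (m + 1), if l.1 ≤ j.1 then yc m g l.1 else 1) = g j
  rw [Fin.prod_univ_eq_prod_range (fun l => if l ≤ j.1 then yc m g l else 1) (m + 1)]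
  have h2 : (∏ l ∈ Finset.range (m + 1), if l ≤ j.1 then yc m g l else 1)
      = ∏ l ∈ Finset.range (j.1 + 1), yc m g l := by
    rw [← Finset.prod_subset (Finset.range_subset_range.2 (by omega : j.1 + 1 ≤ m + 1))
      (fun x _ hx => if_neg (by simp at hx ⊢; omega))]
    exact Finset.prod_congr rfl fun l hl => if_pos (by simp at hl; omega)
  rw [h2]
  have h3 : (∏ l ∈ Finset.range (j.1 + 1), yc m g l)
      = coord m g (j.1 + 1) / coord m g 0 := Finset.prod_range_div (coord m g) (j.1 + 1)
  rw [h3, coord_zero, div_one, coord_pos g (by omega) (by omega)]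
  exact congrArg g (Fin.ext (by simp))

lemma coord_gOf {m : ℕ} {y : Fin (m + 1) → G} (hy : ∏ l, y l = 1) (p : ℕ) (hp : p ≤ m + 1) :
    coord m (gOf m y) p = ∏ l : Fin (m + 1), if l.1 < p then y l else 1 := by
  rcases Nat.eq_zero_or_pos p with h0 | h1
  · subst h0; rw [coord_zero]; simp
  rcases Nat.lt_or_ge p (m + 1) with h | h
  · rw [coord_pos _ h1 (by omega)]
    show (∏ l : Fin (m + 1), if l.1 ≤ p - 1 then y l else 1) = _
    exact Finset.prod_congr rfl fun l _ => if_congr (by omega) rfl rfl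
  · have hpm : p = m + 1 := by omega
    subst hpm
    rw [coord_top, Finset.prod_congr rfl (fun l _ => if_pos l.isLt), hy]

lemma yc_gOf {m : ℕ} {y : Fin (m + 1) → G} (hy : ∏ l, y l = 1) (k : Fin (m + 1)) :
    yc m (gOf m y) k.1 = y k := by
  have hsplit : (∏ l : Fin (m + 1), if l.1 < k.1 + 1 then y l else 1)
      = (∏ l : Fin (m + 1), if l.1 < k.1 then y l else 1) * y k := by
    have hstep : ∀ l : Fin (m + 1), (if l.1 < k.1 + 1 then y l else 1)
        = (if l.1 < k.1 then y l else 1) * (if l = k then y l else 1) := by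
      intro l
      by_cases h1 : l = k
      · subst h1; simp
      · have hne : l.1 ≠ k.1 := fun h => h1 (Fin.ext h)
        by_cases h2 : l.1 < k.1
        · rw [if_pos (by omega), if_pos h2, if_neg h1, mul_one]
        · rw [if_neg (by omega), if_neg h2, if_neg h1, mul_one]
    rw [Finset.prod_congr rfl fun l _ => hstep l, Finset.prod_mul_distrib,
      Finset.prod_ite_eq' Finset.univ k y]
    simp
  show coord m (gOf m y) (k.1 + 1) / coord m (gOf m y) k.1 = y k
  rw [coord_gOf hy (k.1 + 1) (by omega), coord_gOf hy k.1 (by omega), hsplit]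
  exact mul_div_cancel_left _ _

lemma prod_yc {m : ℕ} (g : Fin m → G) : ∏ k : Fin (m + 1), yc m g k.1 = 1 := by
  rw [Fin.prod_univ_eq_prod_range (fun k => yc m g k) (m + 1)]
  have : (∏ k ∈ Finset.range (m + 1), yc m g k)
      = coord m g (m + 1) / coord m g 0 := Finset.prod_range_div (coord m g) (m + 1)
  rw [this, coord_top, coord_zero, div_one]

def act (m : ℕ) (σ : Equiv.Perm (Fin (m + 1))) (g : Fin m → G) : Fin m → G :=
  gOf m (fun k => yc m g (σ.symm k).1)

lemma prod_yc_comp {m : ℕ} (g : Fin m → G) (τ : Equiv.Perm (Fin (m + 1))) :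
    ∏ k : Fin (m + 1), yc m g (τ k).1 = 1 := by
  rw [Equiv.prod_comp τ (fun k => yc m g k.1)]; exact prod_yc g

lemma act_one {m : ℕ} (g : Fin m → G) : act m 1 g = g := gOf_yc g

lemma act_act {m : ℕ} (σ τ : Equiv.Perm (Fin (m + 1))) (g : Fin m → G) :
    act m σ (act m τ g) = act m (σ * τ) g := by
  unfold act
  have h : (fun k : Fin (m + 1) => yc m (gOf m fun k' => yc m g ((Equiv.symm τ) k').1) ((Equiv.symm σ) k).1)
      = fun k : Fin (m + 1) => yc m g ((Equiv.symm (σ * τ)) k).1 := by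
    funext k
    exact yc_gOf (prod_yc_comp g τ.symm) (σ.symm k)
  rw [h]


def permAct (m : ℕ) (σ : Equiv.Perm (Fin (m + 1))) : Equiv.Perm (Fin m → G) where
  toFun := act m σ
  invFun := act m σ⁻¹
  left_inv g := by rw [act_act, inv_mul_cancel, act_one]
  right_inv g := by rw [act_act, mul_inv_cancel, act_one]

def rho (m : ℕ) : Equiv.Perm (Fin (m + 1)) →* Equiv.Perm (Fin m → G) where
  toFun := permAct m
  map_one' := Equiv.ext fun g => act_one g
  map_mul' σ τ := Equiv.ext fun g => by
    rw [Equiv.Perm.mul_apply]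
    exact (act_act σ τ g).symm

lemma act_swap {m i : ℕ} (h1 : 1 ≤ i) (h2 : i ≤ m) :
    act m (Equiv.swap (⟨i - 1, Nat.lt_succ_of_le (by omega)⟩ : Fin (m + 1)) ⟨i, Nat.lt_succ_of_le h2⟩) = gam m i (G := G) := by
  funext g j
  set a : Fin (m + 1) := ⟨i - 1, by omega⟩ with ha
  set b : Fin (m + 1) := ⟨i, by omega⟩ with hb
  have hab : a ≠ b := by simp [ha, hb, Fin.ext_iff]; omega
  show (∏ l : Fin (m + 1), if l.1 ≤ j.1 then yc m g ((Equiv.swap a b).symm l).1 else 1)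
      = gam m i g j
  simp only [Equiv.symm_swap]
  unfold gam
  by_cases hj : j.1 + 1 = i
  · rw [if_pos hj]
    have hstep : ∀ l : Fin (m + 1), (if l.1 ≤ j.1 then yc m g ((Equiv.swap a b) l).1 else 1)
        = (if l.1 ≤ j.1 then yc m g l.1 else 1) * (if l = a then yc m g i / yc m g (i - 1) else 1) := by
      intro l
      by_cases hla : l = a
      · subst hla
        rw [Equiv.swap_apply_left, if_pos (by simp [ha]; omega), if_pos (by simp [ha]; omega),
          if_pos rfl]
        show yc m g i = yc m g (i - 1) * (yc m g i / yc m g (i - 1))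
        rw [mul_div_cancel]
      · by_cases hlb : l = b
        · subst hlb
          rw [if_neg (by simp [hb]; omega), if_neg (by simp [hb]; omega), if_neg hab.symm, mul_one]
        · rw [Equiv.swap_apply_of_ne_of_ne hla hlb, if_neg hla, mul_one]
    rw [Finset.prod_congr rfl fun l _ => hstep l, Finset.prod_mul_distrib,
      Finset.prod_ite_eq' Finset.univ a (fun _ => yc m g i / yc m g (i - 1))]
    have hg : (∏ l : Fin (m + 1), if l.1 ≤ j.1 then yc m g l.1 else 1) = g j := congrFun (gOf_yc g) j
    rw [hg]
    simp only [Finset.mem_univ, if_pos]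
    have hgj : g j = coord m g i := by
      rw [coord_pos g h1 h2]
      exact congrArg g (Fin.ext (by simp; omega))
    rw [hgj]
    show coord m g i * (coord m g (i + 1) / coord m g i /
        (coord m g (i - 1 + 1) / coord m g (i - 1)))
        = coord m g (i - 1) * (coord m g i)⁻¹ * coord m g (i + 1)
    have : i - 1 + 1 = i := by omega
    rw [this]
    simp [div_eq_mul_inv, mul_inv_rev, inv_inv, mul_comm, mul_left_comm, mul_assoc]
  · rw [if_neg hj]
    rcases Nat.lt_or_ge j.1 (i - 1) with hlt | hge
    · have : (∏ l : Fin (m + 1), if l.1 ≤ j.1 then yc m g ((Equiv.swap a b) l).1 else 1)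
          = ∏ l : Fin (m + 1), if l.1 ≤ j.1 then yc m g l.1 else 1 := by
        refine Finset.prod_congr rfl fun l _ => ?_
        by_cases hl : l.1 ≤ j.1
        · rw [if_pos hl, if_pos hl,
            Equiv.swap_apply_of_ne_of_ne (by simp [ha, Fin.ext_iff]; omega)
              (by simp [hb, Fin.ext_iff]; omega)]
        · rw [if_neg hl, if_neg hl]
      rw [this]
      exact congrFun (gOf_yc g) j
    · have hge' : i ≤ j.1 := by omega
      have hstep : ∀ l : Fin (m + 1), (if l.1 ≤ j.1 then yc m g ((Equiv.swap a b) l).1 else 1)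
          = (if ((Equiv.swap a b) l).1 ≤ j.1 then yc m g ((Equiv.swap a b) l).1 else 1) := by
        intro l
        by_cases hla : l = a
        · subst hla
          rw [Equiv.swap_apply_left, if_pos (by simp [ha]; omega), if_pos (by simp [hb]; omega)]
        · by_cases hlb : l = b
          · subst hlb
            rw [Equiv.swap_apply_right, if_pos (by simp [hb]; omega), if_pos (by simp [ha]; omega)]
          · rw [Equiv.swap_apply_of_ne_of_ne hla hlb]
      rw [Finset.prod_congr rfl fun l _ => hstep l,
        Equiv.prod_comp (Equiv.swap a b) (fun l => if l.1 ≤ j.1 then yc m g l.1 else 1)]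
      exact congrFun (gOf_yc g) j

lemma swap_comm_of_ne {α : Type*} [DecidableEq α] {a b c d : α}
    (h1 : a ≠ c) (h2 : a ≠ d) (h3 : b ≠ c) (h4 : b ≠ d) :
    Equiv.swap a b * Equiv.swap c d = Equiv.swap c d * Equiv.swap a b := by
  have hd : (Equiv.swap a b).Disjoint (Equiv.swap c d) := by
    intro x
    by_cases hx : x = a ∨ x = b
    · right; rcases hx with h | h <;> subst h
      · exact Equiv.swap_apply_of_ne_of_ne h1 h2
      · exact Equiv.swap_apply_of_ne_of_ne h3 h4
    · left; push_neg at hx; exact Equiv.swap_apply_of_ne_of_ne hx.1 hx.2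
  exact hd.commute.eq

lemma swap_cube {α : Type*} [DecidableEq α] {a b c : α}
    (hab : a ≠ b) (hbc : b ≠ c) (hac : a ≠ c) :
    (Equiv.swap a b * Equiv.swap b c) * ((Equiv.swap a b * Equiv.swap b c) *
      (Equiv.swap a b * Equiv.swap b c)) = 1 := by
  set π := Equiv.swap a b * Equiv.swap b c with hπ
  have hpa : π a = b := by
    rw [hπ, Equiv.Perm.mul_apply, Equiv.swap_apply_of_ne_of_ne hab hac, Equiv.swap_apply_left]
  have hpb : π b = c := by
    rw [hπ, Equiv.Perm.mul_apply, Equiv.swap_apply_left,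
      Equiv.swap_apply_of_ne_of_ne (Ne.symm hac) (Ne.symm hbc)]
  have hpc : π c = a := by
    rw [hπ, Equiv.Perm.mul_apply, Equiv.swap_apply_right, Equiv.swap_apply_right]
  have hpx : ∀ x, x ≠ a → x ≠ b → x ≠ c → π x = x := fun x h1 h2 h3 => by
    rw [hπ, Equiv.Perm.mul_apply, Equiv.swap_apply_of_ne_of_ne h2 h3,
      Equiv.swap_apply_of_ne_of_ne h1 h2]
  ext x
  simp only [Equiv.Perm.mul_apply, Equiv.Perm.one_apply]
  by_cases hxa : x = a
  · subst hxa; rw [hpa, hpb, hpc]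
  by_cases hxb : x = b
  · subst hxb; rw [hpb, hpc, hpa]
  by_cases hxc : x = c
  · subst hxc; rw [hpc, hpa, hpb]
  · rw [hpx x hxa hxb hxc, hpx x hxa hxb hxc, hpx x hxa hxb hxc]

lemma rho_inj {m : ℕ} [Fintype G] (hm : 1 < m) (hG : 2 < Fintype.card G) :
    Function.Injective (rho (G := G) m) := by
  have : Nontrivial G := Fintype.one_lt_card_iff_nontrivial.mp (by omega)
  rw [injective_iff_map_eq_one]
  intro σ hσ
  have hfix : ∀ g : Fin m → G, act m σ g = g := fun g => Equiv.ext_iff.mp hσ g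
  have hkey : ∀ l : Fin (m + 1), σ.symm l = l := by
    intro l
    by_contra hne
    obtain ⟨u, hu⟩ := exists_ne (1 : G)
    have hc : ∃ c : Fin (m + 1), c ≠ σ.symm l ∧ c ≠ l := by
      by_contra hcon
      push_neg at hcon
      have hsub : (Finset.univ : Finset (Fin (m + 1))) ⊆ {σ.symm l, l} := by
        intro x _
        rcases eq_or_ne x (σ.symm l) with h | h
        · simp [h]
        · simp [hcon x h]
      have := Finset.card_le_card hsub
      have h2 := Finset.card_insert_le (σ.symm l) ({l} : Finset (Fin (m + 1)))
      simp [Finset.card_univ] at this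
      simp at h2
      omega
    obtain ⟨c, hc1, hc2⟩ := hc
    set y : Fin (m + 1) → G := fun x =>
      (if x = σ.symm l then u else 1) * (if x = c then u⁻¹ else 1) with hy
    have hyp : ∏ x, y x = 1 := by
      rw [hy]
      rw [Finset.prod_mul_distrib, Finset.prod_ite_eq' Finset.univ (σ.symm l) (fun _ => u),
        Finset.prod_ite_eq' Finset.univ c (fun _ => u⁻¹)]
      simp
    set g : Fin m → G := gOf m y with hg
    have h1 : yc m (act m σ g) l.1 = yc m g (σ.symm l).1 :=
      yc_gOf (prod_yc_comp g σ.symm) l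
    rw [hfix g] at h1
    rw [hg, yc_gOf hyp l, yc_gOf hyp (σ.symm l)] at h1
    have hyl : y l = 1 := by simp [hy, Ne.symm hne, hc2.symm]
    have hysl : y (σ.symm l) = u := by simp [hy, hc1.symm]
    rw [hyl, hysl] at h1
    exact hu h1.symm
  ext x
  have := hkey (σ x)
  rw [Equiv.symm_apply_apply] at this
  exact congrArg Fin.val this.symm

end AUX

/-- For abelian `G`: the `γ_i` satisfy the Coxeter relations of `S_{m+1}`
(`γ_iγ_j = γ_jγ_i` for `|i−j| > 1`, `(γ_iγ_{i+1})³ = id`), and consequently,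
when `|G| > 2`, the subgroup of permutations of `G^m` they generate is
isomorphic to the symmetric group `S_{m+1}`, via an injective homomorphism
sending the transposition `σ_i = (i, i+1)` to `γ_i`. -/
theorem gam_relations_and_symmetric_group [CommGroup G] [Fintype G]
    (m : ℕ) (hm : 1 < m) :
    (∀ i j : ℕ, 1 ≤ i → i ≤ m → 1 ≤ j → j ≤ m → (i + 1 < j ∨ j + 1 < i) →
      (gam m i (G := G)) ∘ gam m j = gam m j ∘ gam m i) ∧
    (∀ i : ℕ, 1 ≤ i → i + 1 ≤ m →
      ((gam m i (G := G)) ∘ gam m (i + 1)) ∘ ((gam m i) ∘ gam m (i + 1)) ∘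
        ((gam m i) ∘ gam m (i + 1)) = id) ∧
    (2 < Fintype.card G →
      ∃ ρ : Equiv.Perm (Fin (m + 1)) →* Equiv.Perm (Fin m → G),
        Function.Injective ρ ∧
        ∀ i : ℕ, ∀ h1 : 1 ≤ i, ∀ h2 : i ≤ m,
          ⇑(ρ (Equiv.swap (⟨i - 1, by omega⟩ : Fin (m + 1)) ⟨i, by omega⟩)) =
            gam m i (G := G)) := by
  refine ⟨?_, ?_, ?_⟩
  · intro i j hi1 hi2 hj1 hj2 hij
    rw [← act_swap (G := G) hi1 hi2, ← act_swap (G := G) hj1 hj2]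
    have hcomm := swap_comm_of_ne (a := (⟨i - 1, by omega⟩ : Fin (m + 1))) (b := ⟨i, by omega⟩)
      (c := (⟨j - 1, by omega⟩ : Fin (m + 1))) (d := ⟨j, by omega⟩)
      (Fin.ne_of_val_ne (by simp only [Fin.val_mk]; omega)) (Fin.ne_of_val_ne (by simp only [Fin.val_mk]; omega))
      (Fin.ne_of_val_ne (by simp only [Fin.val_mk]; omega)) (Fin.ne_of_val_ne (by simp only [Fin.val_mk]; omega))
    funext g
    simp only [Function.comp_apply]
    rw [act_act, act_act, hcomm]
  · intro i hi1 hi2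
    have e1 := act_swap (G := G) (m := m) (i := i) hi1 (by omega)
    have e2 := act_swap (G := G) (m := m) (i := i + 1) (by omega) hi2
    have hval : (⟨i + 1 - 1, by omega⟩ : Fin (m + 1)) = ⟨i, by omega⟩ := Fin.ext (by simp)
    rw [hval] at e2
    rw [← e1, ← e2]
    set s1 : Equiv.Perm (Fin (m + 1)) := Equiv.swap ⟨i - 1, by omega⟩ ⟨i, by omega⟩
    set s2 : Equiv.Perm (Fin (m + 1)) := Equiv.swap ⟨i, by omega⟩ ⟨i + 1, by omega⟩
    have hc := swap_cube (a := (⟨i - 1, by omega⟩ : Fin (m + 1))) (b := ⟨i, by omega⟩)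
      (c := ⟨i + 1, by omega⟩) (Fin.ne_of_val_ne (by simp only [Fin.val_mk]; omega)) (Fin.ne_of_val_ne (by simp only [Fin.val_mk]; omega))
      (Fin.ne_of_val_ne (by simp only [Fin.val_mk]; omega))
    have hone : s1 * s2 * s1 * s2 * s1 * s2 = 1 := by
      simpa [mul_assoc] using hc
    funext g
    simp only [Function.comp_apply, id_eq]
    rw [act_act, act_act, act_act, act_act, act_act, hone, act_one]
  · intro hG
    refine ⟨rho m, rho_inj hm hG, fun i h1 h2 => ?_⟩
    exact act_swap h1 h2


end CayleyStmt16
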